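/- arXiv:math/0206025 — 3 statements merged into one kernel-verified Lean document; each statement's English description precedes it below -/
import Mathlib

section
/- Let V be an idempotent b-space over a b-complete idempotent semifield K and let W ⊆ V be a wo-closed subsemigroup (closed under sup and inf of linearly ordered subsets). Then sup X ∈ W for every subset X ⊆ W that is bounded above in V; in particular every wo-closed subspace is b-closed. -/
/-- An idempotent semifield: a semiring with idempotent addition in which every
nonzero element is invertible, given by explicit data and axioms. -/
structure IdemSemifield (K : Type*) where
  add : K → K → K
  mul : K → K → K
  zero : K
  one : K
  add_assoc : ∀ a b c, add (add a b) c = add a (add b c)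
  add_comm : ∀ a b, add a b = add b a
  add_idem : ∀ a, add a a = a
  mul_assoc : ∀ a b c, mul (mul a b) c = mul a (mul b c)
  one_mul : ∀ a, mul one a = a
  mul_one : ∀ a, mul a one = a
  zero_add : ∀ a, add zero a = a
  zero_mul : ∀ a, mul zero a = zero
  mul_zero : ∀ a, mul a zero = zero
  zero_ne_one : zero ≠ one
  left_distrib : ∀ a b c, mul a (add b c) = add (mul a b) (mul a c)
  right_distrib : ∀ a b c, mul (add a b) c = add (mul a c) (mul b c)
  inv_exists : ∀ a, a ≠ zero → ∃ b, mul a b = one ∧ mul b a = one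

namespace IdemSemifield
variable {K : Type*} (F : IdemSemifield K)

/-- The standard order `a ≼ b ⟺ a ⊕ b = b`. -/
def le (a b : K) : Prop := F.add a b = b
/-- `b` is an upper bound of `X`. -/
def IsUB (X : Set K) (b : K) : Prop := ∀ x ∈ X, F.le x b
/-- `b` is a lower bound of `X`. -/
def IsLB (X : Set K) (b : K) : Prop := ∀ x ∈ X, F.le b x
/-- `s` is the least upper bound of `X`. -/
def IsSup (X : Set K) (s : K) : Prop := F.IsUB X s ∧ ∀ b, F.IsUB X b → F.le s b
/-- `s` is the greatest lower bound of `X`. -/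
def IsInf (X : Set K) (s : K) : Prop := F.IsLB X s ∧ ∀ b, F.IsLB X b → F.le b s
/-- b-completeness: every subset bounded above (including `∅`) has a least
upper bound. -/
def BComplete : Prop := ∀ X : Set K, (∃ b, F.IsUB X b) → ∃ s, F.IsSup X s
/-- `n`-th multiplicative power. -/
def npow (a : K) : ℕ → K
  | 0 => F.one
  | n + 1 => F.mul a (npow a n)
/-- Algebraic closedness (radicability): existence of `n`-th roots. -/
def AlgClosed : Prop := ∀ (a : K) (n : ℕ), 0 < n → ∃ y, F.npow y n = a

end IdemSemifield

/-- An idempotent semimodule (idempotent space) over an idempotent semifield,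
given by explicit data and axioms. -/
structure IdemSpace (K V : Type*) (F : IdemSemifield K) where
  add : V → V → V
  smul : K → V → V
  zero : V
  add_assoc : ∀ x y z, add (add x y) z = add x (add y z)
  add_comm : ∀ x y, add x y = add y x
  add_idem : ∀ x, add x x = x
  zero_add : ∀ x, add zero x = x
  smul_smul : ∀ a b x, smul a (smul b x) = smul (F.mul a b) x
  one_smul : ∀ x, smul F.one x = x
  add_smul : ∀ a b x, smul (F.add a b) x = add (smul a x) (smul b x)
  smul_add : ∀ a x y, smul a (add x y) = add (smul a x) (smul a y)
  zero_smul : ∀ x, smul F.zero x = zero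
  smul_zero : ∀ a, smul a zero = zero

namespace IdemSpace
variable {K V : Type*} {F : IdemSemifield K} (M : IdemSpace K V F)

/-- The standard order on the space. -/
def le (x y : V) : Prop := M.add x y = y
def IsUB (X : Set V) (b : V) : Prop := ∀ x ∈ X, M.le x b
def IsLB (X : Set V) (b : V) : Prop := ∀ x ∈ X, M.le b x
def IsSup (X : Set V) (s : V) : Prop := M.IsUB X s ∧ ∀ b, M.IsUB X b → M.le s b
def IsInf (X : Set V) (s : V) : Prop := M.IsLB X s ∧ ∀ b, M.IsLB X b → M.le b s
/-- A linearly ordered subset. -/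
def IsChain (X : Set V) : Prop := ∀ x ∈ X, ∀ y ∈ X, M.le x y ∨ M.le y x

/-- `M` is an idempotent b-space: it is b-complete and scalar multiplication is
compatible with suprema and infima of nonempty bounded subsets of scalars. -/
def IsBSpace : Prop :=
  (∀ X : Set V, (∃ b, M.IsUB X b) → ∃ s, M.IsSup X s) ∧
  (∀ (Q : Set K) (x : V) (s : K), Q.Nonempty → F.IsSup Q s →
    M.IsSup ((fun k => M.smul k x) '' Q) (M.smul s x)) ∧
  (∀ (Q : Set K) (x : V) (s : K), Q.Nonempty → F.IsInf Q s →
    M.IsInf ((fun k => M.smul k x) '' Q) (M.smul s x))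

/-- A b-linear operator: preserves suprema of (bounded) subsets and commutes
with scalar multiplication. -/
def IsBLinear (f : V → V) : Prop :=
  (∀ (X : Set V) (s : V), M.IsSup X s → M.IsSup (f '' X) (f s)) ∧
  (∀ (k : K) (x : V), f (M.smul k x) = M.smul k (f x))

/-- An Archimedean element. -/
def IsArchElem (x : V) : Prop := ∀ y : V, ∃ lam : K, M.le y (M.smul lam x)

/-- `xs` is the functional `x*`, `x* (y) = inf {k : k ⊙ x ≽ y}`. -/
def IsStarOf (x : V) (xs : V → K) : Prop :=
  ∀ y : V, F.IsInf {k : K | M.le y (M.smul k x)} (xs y)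

/-- `x` is a wo-continuous Archimedean element: it is Archimedean and `x*`
preserves suprema and infima of bounded linearly ordered subsets. -/
def IsWoContArchElem (x : V) : Prop :=
  M.IsArchElem x ∧
  ∃ xs : V → K, M.IsStarOf x xs ∧
    (∀ (C : Set V) (s : V), M.IsChain C → M.IsSup C s → F.IsSup (xs '' C) (xs s)) ∧
    (∀ (C : Set V) (s : V), M.IsChain C → M.IsInf C s → F.IsInf (xs '' C) (xs s))

/-- An Archimedean space: a b-space containing a wo-continuous Archimedean
element. -/
def IsArchSpace : Prop := M.IsBSpace ∧ ∃ x : V, M.IsWoContArchElem x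

end IdemSpace

/-- if `V` is an idempotent b-space over a b-complete idempotent
semifield and `W ⊆ V` is a wo-closed subsemigroup (closed under addition and
under suprema and infima of linearly ordered subsets), then the supremum of any
subset of `W` bounded above in `V` again lies in `W`; in particular every
wo-closed subspace is b-closed. -/
theorem wo_closed_subsemigroup_is_b_closed {K V : Type*} (F : IdemSemifield K)
    (hKb : F.BComplete) (M : IdemSpace K V F) (hM : M.IsBSpace)
    (W : Set V)
    (hWadd : ∀ x ∈ W, ∀ y ∈ W, M.add x y ∈ W)
    (hWwo : ∀ X : Set V, X ⊆ W → M.IsChain X →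
      (∀ s, M.IsSup X s → s ∈ W) ∧ (∀ s, M.IsInf X s → s ∈ W)) :
    ∀ X : Set V, X ⊆ W → (∃ b, M.IsUB X b) → ∀ s, M.IsSup X s → s ∈ W := by
    classical
  intro X hXW hXb s hs
  have hrefl : ∀ x : V, M.le x x := fun x => M.add_idem x
  have htrans : ∀ {x y z : V}, M.le x y → M.le y z → M.le x z := by
    intro x y z hxy hyz
    unfold IdemSpace.le at *
    rw [← hyz, ← M.add_assoc, hxy]
  have hle_add_left : ∀ x y : V, M.le x (M.add x y) := by
    intro x y; unfold IdemSpace.le; rw [← M.add_assoc, M.add_idem]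
  have hle_add_right : ∀ x y : V, M.le y (M.add x y) := by
    intro x y
    show M.add y (M.add x y) = M.add x y
    rw [M.add_comm y (M.add x y), M.add_assoc, M.add_idem]
  have hadd_le : ∀ {x y z : V}, M.le x z → M.le y z → M.le (M.add x y) z := by
    intro x y z h1 h2
    show M.add (M.add x y) z = z
    rw [M.add_assoc, h2, h1]
  letI : PartialOrder V :=
    { le := M.le
      le_refl := hrefl
      le_trans := fun _ _ _ => htrans
      le_antisymm := fun a b h1 h2 => by
        have h1' : M.add a b = b := h1
        have h2' : M.add b a = a := h2
        rw [← h2', M.add_comm, h1'] }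
  rcases X.eq_empty_or_nonempty with rfl | ⟨x0, hx0⟩
  · exact (hWwo ∅ (by simp) (by intro x hx; cases hx)).1 s hs
  set P : Set V := {y ∈ W | M.le y s} with hP
  have hx0P : x0 ∈ P := ⟨hXW hx0, hs.1 x0 hx0⟩
  have hchains : ∀ c ⊆ P, IsChain (· ≤ ·) c → ∀ y ∈ c, ∃ ub ∈ P, ∀ z ∈ c, z ≤ ub := by
    intro c hcP hc y hy
    obtain ⟨t, ht⟩ := hM.1 c ⟨s, fun z hz => (hcP hz).2⟩
    have hcchain : M.IsChain c := by
      intro a ha b hb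
      rcases eq_or_ne a b with rfl | hne
      · exact Or.inl (hrefl a)
      · exact hc ha hb hne
    have htW : t ∈ W := (hWwo c (fun z hz => (hcP hz).1) hcchain).1 t ht
    exact ⟨t, ⟨htW, ht.2 s (fun z hz => (hcP hz).2)⟩, fun z hz => ht.1 z hz⟩
  obtain ⟨m, _, hmax⟩ := zorn_le_nonempty₀ P hchains x0 hx0P
  have hmP : m ∈ P := hmax.1
  have hub : M.IsUB X m := by
    intro x hx
    have hxm : M.add x m ∈ P :=
      ⟨hWadd x (hXW hx) m hmP.1, hadd_le (hs.1 x hx) hmP.2⟩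
    have hle : M.le (M.add x m) m := hmax.2 hxm (hle_add_right x m)
    exact htrans (hle_add_left x m) hle
  have hsm : M.le s m := hs.2 m hub
  have : s = m := le_antisymm hsm hmP.2
  rw [this]
  exact hmP.1
end

section
/- Let V be an idempotent b-space over a b-complete semifield K and let x ∈ V be an Archimedean element. Then the functional x*(y) = inf { k ∈ K : k ⊙ x ≽ y } is well-defined, b-linear (x*(sup Y) = sup x*(Y) for bounded Y ⊆ V and x*(k ⊙ y) = k ⊙ x*(y)), and satisfies x*(y) ⊙ x ≽ y for every y ∈ V. -/
section AuxLemmas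
variable {K V : Type*}

lemma IS_le_refl (F : IdemSemifield K) (a : K) : F.le a a := F.add_idem a

lemma IS_le_trans (F : IdemSemifield K) {a b c : K} (h1 : F.le a b) (h2 : F.le b c) :
    F.le a c := by
  unfold IdemSemifield.le at *
  rw [← h2, ← F.add_assoc, h1]

lemma IS_le_antisymm (F : IdemSemifield K) {a b : K} (h1 : F.le a b) (h2 : F.le b a) :
    a = b := by
  unfold IdemSemifield.le at *
  conv_lhs => rw [← h2]
  rw [F.add_comm]; exact h1

lemma IS_mul_le_mul_left (F : IdemSemifield K) (k : K) {a b : K} (h : F.le a b) :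
    F.le (F.mul k a) (F.mul k b) := by
  unfold IdemSemifield.le at *
  rw [← F.left_distrib, h]

lemma ISp_le_trans {F : IdemSemifield K} (M : IdemSpace K V F) {a b c : V}
    (h1 : M.le a b) (h2 : M.le b c) : M.le a c := by
  unfold IdemSpace.le at *
  rw [← h2, ← M.add_assoc, h1]

lemma ISp_smul_le_smul_left {F : IdemSemifield K} (M : IdemSpace K V F) (k : K) {u v : V}
    (h : M.le u v) : M.le (M.smul k u) (M.smul k v) := by
  unfold IdemSpace.le at *
  rw [← M.smul_add, h]

lemma ISp_smul_le_smul_right {F : IdemSemifield K} (M : IdemSpace K V F) {a b : K} (v : V)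
    (h : F.le a b) : M.le (M.smul a v) (M.smul b v) := by
  unfold IdemSpace.le; rw [← M.add_smul, h]

lemma IS_exists_inf (F : IdemSemifield K) (hKb : F.BComplete) (S : Set K)
    (hne : S.Nonempty) : ∃ i : K, F.IsInf S i := by
  obtain ⟨k, hk⟩ := hne
  obtain ⟨s, hs⟩ := hKb {b | F.IsLB S b} ⟨k, fun l hl => hl k hk⟩
  refine ⟨s, fun m hm => hs.2 m (fun l hl => hl m hm), fun b hb => hs.1 b hb⟩

end AuxLemmas

/-- if `x` is an Archimedean element of an idempotent b-space `V`
over a b-complete idempotent semifield `K`, then the functional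
`x* (y) = inf {k : k ⊙ x ≽ y}` is well defined (the infimum exists), it is
b-linear (it preserves suprema of bounded subsets and is homogeneous), and
`x* (y) ⊙ x ≽ y` for all `y`. -/
theorem arch_element_star_functional {K V : Type*} (F : IdemSemifield K)
    (hKb : F.BComplete) (M : IdemSpace K V F) (hM : M.IsBSpace)
    (x : V) (hx : M.IsArchElem x) :
    -- the infimum defining `x*` exists
    (∀ y : V, ∃ i : K, F.IsInf {k : K | M.le y (M.smul k x)} i) ∧
    -- and any function realizing it is b-linear and satisfies `x*(y) ⊙ x ≽ y`
    ∀ xs : V → K, M.IsStarOf x xs →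
      (∀ (Y : Set V) (s : V), M.IsSup Y s → F.IsSup (xs '' Y) (xs s)) ∧
      (∀ (k : K) (y : V), xs (M.smul k y) = F.mul k (xs y)) ∧
      (∀ y : V, M.le y (M.smul (xs y) x)) := by
  constructor
  · exact fun y => IS_exists_inf F hKb _ (hx y)
  · intro xs hxs
    -- key: xs y ⊙ x ≽ y
    have hmem : ∀ y : V, M.le y (M.smul (xs y) x) := by
      intro y
      have hinf := hM.2.2 {k : K | M.le y (M.smul k x)} x (xs y) (hx y) (hxs y)
      exact hinf.2 y (fun v hv => by
        obtain ⟨k, hk, rfl⟩ := hv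
        exact hk)
    have hmono : ∀ {y y' : V}, M.le y y' → F.le (xs y) (xs y') := by
      intro y y' h
      exact (hxs y').2 (xs y) (fun m hm => (hxs y).1 m (ISp_le_trans M h hm))
    refine ⟨?_, ?_, hmem⟩
    · intro Y s hY
      constructor
      · rintro a ⟨y, hy, rfl⟩
        exact hmono (hY.1 y hy)
      · intro b hb
        refine (hxs s).1 b (hY.2 (M.smul b x) (fun y hy => ?_))
        exact ISp_le_trans M (hmem y) (ISp_smul_le_smul_right M x (hb (xs y) ⟨y, hy, rfl⟩))
    · intro k y
      by_cases hk : k = F.zero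
      · subst hk
        rw [F.zero_mul, M.zero_smul]
        refine IS_le_antisymm F ((hxs M.zero).1 F.zero ?_) (F.zero_add _)
        exact (by
          show M.add M.zero (M.smul F.zero x) = M.smul F.zero x
          exact M.zero_add _)
      · obtain ⟨k', hkk', hk'k⟩ := F.inv_exists k hk
        have hB : F.IsInf {m : K | M.le (M.smul k y) (M.smul m x)} (F.mul k (xs y)) := by
          constructor
          · intro m hm
            have h1 : M.le y (M.smul (F.mul k' m) x) := by
              have := ISp_smul_le_smul_left M k' hm
              rw [M.smul_smul, M.smul_smul, hk'k, M.one_smul] at this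
              exact this
            have h2 : F.le (xs y) (F.mul k' m) := (hxs y).1 _ h1
            have h3 := IS_mul_le_mul_left F k h2
            rw [← F.mul_assoc, hkk', F.one_mul] at h3
            exact h3
          · intro b hb
            have h1 : F.le (F.mul k' b) (xs y) := by
              refine (hxs y).2 _ (fun m hm => ?_)
              have h2 : M.le (M.smul k y) (M.smul (F.mul k m) x) := by
                have := ISp_smul_le_smul_left M k hm
                rw [M.smul_smul] at this
                exact this
              have h3 := IS_mul_le_mul_left F k' (hb _ h2)
              rw [← F.mul_assoc, hk'k, F.one_mul] at h3
              exact h3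
            have h4 := IS_mul_le_mul_left F k h1
            rw [← F.mul_assoc, hkk', F.one_mul] at h4
            exact h4
        exact IS_le_antisymm F (hB.2 _ (hxs _).1) ((hxs _).2 _ hB.1)
end

section
/- Every linear representation of a finite group G in an idempotent b-space V over a b-complete idempotent semifield, with V ≠ {0}, has a nonzero joint eigenvector with eigenvalue 1: there exists a ≠ 0 with π(g)a = a for all g ∈ G. -/
/-- every linear representation of a finite group `G` in a
nonzero idempotent b-space `V` over a b-complete idempotent semifield has a
nonzero joint eigenvector with eigenvalue `1`: there is `a ≠ 0` with
`π(g)a = a` for all `g ∈ G`. -/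
theorem finite_group_rep_fixed_vector {K V : Type*} {G : Type*} [Group G] [Finite G]
    (F : IdemSemifield K) (hKb : F.BComplete)
    (M : IdemSpace K V F) (hM : M.IsBSpace)
    (π : G → V → V)
    (hbij : ∀ g, Function.Bijective (π g))
    (hlin : ∀ g, M.IsBLinear (π g))
    (hmul : ∀ g h, π (g * h) = π g ∘ π h)
    (hV : ∃ v : V, v ≠ M.zero) :
    ∃ a : V, a ≠ M.zero ∧ ∀ g : G, π g a = a := by
  obtain ⟨x, hx⟩ := hV
  have hle_antisymm : ∀ u v : V, M.le u v → M.le v u → u = v := by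
    intro u v h1 h2
    calc u = M.add v u := h2.symm
    _ = M.add u v := M.add_comm v u
    _ = v := h1
  have hsup_unique : ∀ (X : Set V) (s t : V), M.IsSup X s → M.IsSup X t → s = t := by
    intro X s t hs ht
    exact hle_antisymm s t (hs.2 t ht.1) (ht.2 s hs.1)
  have hπ1 : ∀ v : V, π (1 : G) v = v := by
    intro v
    have h := congrFun (hmul 1 1) v
    rw [one_mul] at h
    exact ((hbij 1).1 h).symm
  have bounded : ∀ T : Set V, T.Finite → ∃ b, M.IsUB T b := by
    intro T hT
    refine Set.Finite.induction_on (motive := fun T _ => ∃ b, M.IsUB T b) T hT ⟨M.zero, fun y hy => absurd hy (Set.notMem_empty y)⟩ ?_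
    intro c s hnm hfin ih
    · obtain ⟨b, hb⟩ := ih
      refine ⟨M.add c b, fun y hy => ?_⟩
      rcases hy with rfl | hy
      · show M.add y (M.add y b) = M.add y b
        rw [← M.add_assoc, M.add_idem]
      · have := hb y hy
        show M.add y (M.add c b) = M.add c b
        rw [M.add_comm c b, ← M.add_assoc, this]
  set S : Set V := Set.range (fun g => π g x) with hS
  obtain ⟨b, hb⟩ := bounded S (Set.finite_range _)
  obtain ⟨a, ha⟩ := hM.1 S ⟨b, hb⟩
  have hxS : x ∈ S := ⟨1, hπ1 x⟩
  refine ⟨a, ?_, ?_⟩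
  · intro haz
    apply hx
    have hxa : M.le x a := ha.1 x hxS
    rw [haz] at hxa
    calc x = M.add M.zero x := (M.zero_add x).symm
    _ = M.add x M.zero := M.add_comm _ _
    _ = M.zero := hxa
  · intro g
    have himg : π g '' S = S := by
      apply Set.eq_of_subset_of_subset
      · rintro y ⟨z, ⟨h, rfl⟩, rfl⟩
        exact ⟨g * h, congrFun (hmul g h) x⟩
      · rintro y ⟨h, rfl⟩
        exact ⟨π (g⁻¹ * h) x, ⟨g⁻¹ * h, rfl⟩, by
          rw [← Function.comp_apply (f := π g), ← hmul, mul_inv_cancel_left]⟩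
    have := (hlin g).1 S a ha
    rw [himg] at this
    exact hsup_unique S _ _ this ha
end
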